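/- For every n ∈ ℕ₀ there exists a constant R_n ≥ 0 such that for all k > 0, sup_{q ∈ ℝ^d} |∂_k^n r̄(q;k)| ≤ R_n · k^{2−n}. In particular one may take R_n = Σ_{a=1}^{n+1} Σ_{b=0}^{n+1−a} |β^n_{a,b}| (1 + b/a)^b, where the β^l_{a,b} are defined by β⁰_{1,0} = 1, β⁰_{a,b} = 0 otherwise, and β^{l+1}_{a,b} = (2 − l − 2a − 2b) β^l_{a,b} + 2a β^l_{a,b−1} + 2b β^l_{a−1,b}. -/

import Mathlib

open Classical in
/-- The exponential regulator `r̄(q;k) = ‖q‖²/(exp(‖q‖²/k²) − 1)`, extended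
continuously by `r̄(0;k) = k²`. -/
noncomputable def rbar (d : ℕ) (q : EuclideanSpace ℝ (Fin d)) (k : ℝ) : ℝ :=
  if q = 0 then k ^ 2 else ‖q‖ ^ 2 / (Real.exp (‖q‖ ^ 2 / k ^ 2) - 1)

open Classical in
/-- The constants `β^l_{a,b}`: `β⁰_{1,0} = 1`, `β⁰_{a,b} = 0` otherwise, and
`β^{l+1}_{a,b} = (2 − l − 2a − 2b) β^l_{a,b} + 2a β^l_{a,b−1} + 2b β^l_{a−1,b}`. -/
noncomputable def betaC : ℕ → ℤ → ℤ → ℝ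
  | 0, a, b => if a = 1 ∧ b = 0 then 1 else 0
  | (l + 1), a, b =>
      (2 - (l : ℝ) - 2 * (a : ℝ) - 2 * (b : ℝ)) * betaC l a b
        + 2 * (a : ℝ) * betaC l a (b - 1) + 2 * (b : ℝ) * betaC l (a - 1) b

lemma betaC_eq_zero : ∀ (n : ℕ) (a b : ℤ), (a ≤ 0 ∨ b < 0 ∨ (n : ℤ) + 1 < a + b) → betaC n a b = 0 := by
  intro n
  induction n with
  | zero =>
    intro a b h
    simp only [betaC, ite_eq_right_iff, and_imp]
    intro ha hb
    subst ha; subst hb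
    rcases h with h | h | h <;> omega
  | succ l ih =>
    intro a b h
    simp only [betaC]
    rcases h with h | h | h
    · rw [ih a b (Or.inl h), ih a (b-1) (Or.inl h), ih (a-1) b (Or.inl (by omega))]
      ring
    · rw [ih a b (Or.inr (Or.inl h)), ih a (b-1) (Or.inr (Or.inl (by omega))),
        ih (a-1) b (Or.inr (Or.inl h))]
      ring
    · rw [ih a b (Or.inr (Or.inr (by omega))),
        ih a (b-1) (Or.inr (Or.inr (by omega))),
        ih (a-1) b (Or.inr (Or.inr (by omega)))]
      ring

lemma sum_shift (m : ℕ) (f : ℕ → ℝ) :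
    ∑ b ∈ Finset.Icc 1 (m+1), f b = ∑ b ∈ Finset.Icc 0 m, f (b+1) := by
  rw [show Finset.Icc 1 (m+1) = (Finset.Icc 0 m).map (addRightEmbedding 1) by
    rw [Finset.map_add_right_Icc], Finset.sum_map]
  rfl

lemma sum_drop_zero (m : ℕ) (f : ℕ → ℝ) (h0 : f 0 = 0) :
    ∑ b ∈ Finset.Icc 0 m, f b = ∑ b ∈ Finset.Icc 1 m, f b := by
  refine (Finset.sum_subset (Finset.Icc_subset_Icc (by omega) le_rfl) ?_).symm
  intro b hb hnb
  simp only [Finset.mem_Icc] at hb hnb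
  have : b = 0 := by omega
  rw [this, h0]

lemma sum_top_zero {lo m : ℕ} (f : ℕ → ℝ) (h0 : f (m+1) = 0) (hlo : lo ≤ m + 1) :
    ∑ b ∈ Finset.Icc lo m, f b = ∑ b ∈ Finset.Icc lo (m+1), f b := by
  refine Finset.sum_subset (Finset.Icc_subset_Icc le_rfl (by omega)) ?_
  intro b hb hnb
  simp only [Finset.mem_Icc] at hb hnb
  have : b = m + 1 := by omega
  rw [this, h0]

lemma sum_rect_shrink (n : ℕ) (f : ℕ → ℕ → ℝ)
    (ha : ∀ b, b ≤ n + 2 → f (n+2) b = 0)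
    (hb : ∀ a, 1 ≤ a → a ≤ n + 1 → f a (n+2) = 0) :
    ∑ a ∈ Finset.Icc 1 (n + 2), ∑ b ∈ Finset.Icc 0 (n + 2), f a b
    = ∑ a ∈ Finset.Icc 1 (n + 1), ∑ b ∈ Finset.Icc 0 (n + 1), f a b := by
  have step1 : ∑ a ∈ Finset.Icc 1 (n + 2), ∑ b ∈ Finset.Icc 0 (n + 2), f a b
      = ∑ a ∈ Finset.Icc 1 (n + 1), ∑ b ∈ Finset.Icc 0 (n + 2), f a b := by
    refine (Finset.sum_subset (Finset.Icc_subset_Icc le_rfl (by omega)) ?_).symm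
    intro a haa hna
    simp only [Finset.mem_Icc] at haa hna
    have : a = n + 2 := by omega
    subst this
    exact Finset.sum_eq_zero fun b hbb => ha b (by simp only [Finset.mem_Icc] at hbb; omega)
  rw [step1]
  refine Finset.sum_congr rfl fun a haa => ?_
  simp only [Finset.mem_Icc] at haa
  exact (sum_top_zero (f a) (hb a haa.1 haa.2) (by omega)).symm

lemma sum_identity (n : ℕ) (Y Z W : ℝ) :
    ∑ a ∈ Finset.Icc 1 (n + 2), ∑ b ∈ Finset.Icc 0 (n + 2),
        betaC (n+1) (a:ℤ) (b:ℤ) * (W * Y ^ a * Z ^ b)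
    = ∑ a ∈ Finset.Icc 1 (n + 1), ∑ b ∈ Finset.Icc 0 (n + 1),
        betaC n (a:ℤ) (b:ℤ) *
          (W * ((2 - (n:ℝ) - 2*(a:ℝ) - 2*(b:ℝ)) * (Y ^ a * Z ^ b)
            + 2*(a:ℝ) * (Y ^ a * Z ^ (b+1)) + 2*(b:ℝ) * (Y ^ (a+1) * Z ^ b))) := by
  have lhs_split :
      ∑ a ∈ Finset.Icc 1 (n + 2), ∑ b ∈ Finset.Icc 0 (n + 2),
        betaC (n+1) (a:ℤ) (b:ℤ) * (W * Y ^ a * Z ^ b)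
      = (∑ a ∈ Finset.Icc 1 (n + 2), ∑ b ∈ Finset.Icc 0 (n + 2),
          (2 - (n:ℝ) - 2*(a:ℝ) - 2*(b:ℝ)) * betaC n (a:ℤ) (b:ℤ) * (W * Y ^ a * Z ^ b))
        + (∑ a ∈ Finset.Icc 1 (n + 2), ∑ b ∈ Finset.Icc 0 (n + 2),
          2*(a:ℝ) * betaC n (a:ℤ) ((b:ℤ)-1) * (W * Y ^ a * Z ^ b))
        + (∑ a ∈ Finset.Icc 1 (n + 2), ∑ b ∈ Finset.Icc 0 (n + 2),
          2*(b:ℝ) * betaC n ((a:ℤ)-1) (b:ℤ) * (W * Y ^ a * Z ^ b)) := by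
    rw [← Finset.sum_add_distrib, ← Finset.sum_add_distrib]
    refine Finset.sum_congr rfl fun a _ => ?_
    rw [← Finset.sum_add_distrib, ← Finset.sum_add_distrib]
    refine Finset.sum_congr rfl fun b _ => ?_
    simp only [betaC]
    push_cast
    ring
  rw [lhs_split]
  have e1 : ∑ a ∈ Finset.Icc 1 (n + 2), ∑ b ∈ Finset.Icc 0 (n + 2),
        (2 - (n:ℝ) - 2*(a:ℝ) - 2*(b:ℝ)) * betaC n (a:ℤ) (b:ℤ) * (W * Y ^ a * Z ^ b)
      = ∑ a ∈ Finset.Icc 1 (n + 1), ∑ b ∈ Finset.Icc 0 (n + 1),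
        (2 - (n:ℝ) - 2*(a:ℝ) - 2*(b:ℝ)) * betaC n (a:ℤ) (b:ℤ) * (W * Y ^ a * Z ^ b) := by
    refine sum_rect_shrink n _ (fun b hbb => ?_) (fun a h1a h2a => ?_)
    · rw [betaC_eq_zero n _ (b:ℤ) (Or.inr (Or.inr (by omega)))]; ring
    · rw [betaC_eq_zero n (a:ℤ) _ (Or.inr (Or.inr (by omega)))]; ring
  have e2 : ∑ a ∈ Finset.Icc 1 (n + 2), ∑ b ∈ Finset.Icc 0 (n + 2),
        2*(a:ℝ) * betaC n (a:ℤ) ((b:ℤ)-1) * (W * Y ^ a * Z ^ b)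
      = ∑ a ∈ Finset.Icc 1 (n + 1), ∑ b ∈ Finset.Icc 0 (n + 1),
        2*(a:ℝ) * betaC n (a:ℤ) (b:ℤ) * (W * Y ^ a * Z ^ (b+1)) := by
    calc
      ∑ a ∈ Finset.Icc 1 (n + 2), ∑ b ∈ Finset.Icc 0 (n + 2),
          2*(a:ℝ) * betaC n (a:ℤ) ((b:ℤ)-1) * (W * Y ^ a * Z ^ b)
        = ∑ a ∈ Finset.Icc 1 (n + 1), ∑ b ∈ Finset.Icc 0 (n + 1),
          2*(a:ℝ) * betaC n (a:ℤ) ((b:ℤ)-1) * (W * Y ^ a * Z ^ b) := by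
          refine sum_rect_shrink n _ (fun b hbb => ?_) (fun a h1a h2a => ?_)
          · rcases Nat.eq_zero_or_pos b with h0 | hpos
            · subst h0
              rw [betaC_eq_zero n _ _ (Or.inr (Or.inl (by omega)))]; ring
            · rw [betaC_eq_zero n _ _ (Or.inr (Or.inr (by omega)))]; ring
          · rw [betaC_eq_zero n (a:ℤ) _ (Or.inr (Or.inr (by omega)))]; ring
      _ = ∑ a ∈ Finset.Icc 1 (n + 1), ∑ b ∈ Finset.Icc 1 (n + 1),
          2*(a:ℝ) * betaC n (a:ℤ) ((b:ℤ)-1) * (W * Y ^ a * Z ^ b) := by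
          refine Finset.sum_congr rfl fun a _ => sum_drop_zero (n+1) _ ?_
          simp only [Nat.cast_zero, zero_sub, pow_zero]
          rw [betaC_eq_zero n (a:ℤ) (-1) (Or.inr (Or.inl (by omega)))]; ring
      _ = ∑ a ∈ Finset.Icc 1 (n + 1), ∑ b ∈ Finset.Icc 0 n,
          2*(a:ℝ) * betaC n (a:ℤ) (((b+1:ℕ):ℤ)-1) * (W * Y ^ a * Z ^ (b+1)) := by
          exact Finset.sum_congr rfl fun a _ => sum_shift n _
      _ = ∑ a ∈ Finset.Icc 1 (n + 1), ∑ b ∈ Finset.Icc 0 n,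
          2*(a:ℝ) * betaC n (a:ℤ) (b:ℤ) * (W * Y ^ a * Z ^ (b+1)) := by
          refine Finset.sum_congr rfl fun a _ => Finset.sum_congr rfl fun b _ => ?_
          rw [show ((b+1:ℕ):ℤ) - 1 = (b:ℤ) by push_cast; ring]
      _ = ∑ a ∈ Finset.Icc 1 (n + 1), ∑ b ∈ Finset.Icc 0 (n + 1),
          2*(a:ℝ) * betaC n (a:ℤ) (b:ℤ) * (W * Y ^ a * Z ^ (b+1)) := by
          refine Finset.sum_congr rfl fun a ha => sum_top_zero _ ?_ (by omega)
          simp only [Finset.mem_Icc] at ha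
          rw [betaC_eq_zero n (a:ℤ) ((n+1:ℕ):ℤ) (Or.inr (Or.inr (by omega)))]; ring
  have e3 : ∑ a ∈ Finset.Icc 1 (n + 2), ∑ b ∈ Finset.Icc 0 (n + 2),
        2*(b:ℝ) * betaC n ((a:ℤ)-1) (b:ℤ) * (W * Y ^ a * Z ^ b)
      = ∑ a ∈ Finset.Icc 1 (n + 1), ∑ b ∈ Finset.Icc 0 (n + 1),
        2*(b:ℝ) * betaC n (a:ℤ) (b:ℤ) * (W * Y ^ (a+1) * Z ^ b) := by
    calc
      ∑ a ∈ Finset.Icc 1 (n + 2), ∑ b ∈ Finset.Icc 0 (n + 2),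
          2*(b:ℝ) * betaC n ((a:ℤ)-1) (b:ℤ) * (W * Y ^ a * Z ^ b)
        = ∑ a ∈ Finset.Icc 1 (n + 1), ∑ b ∈ Finset.Icc 0 (n + 1),
          2*(b:ℝ) * betaC n ((a:ℤ)-1) (b:ℤ) * (W * Y ^ a * Z ^ b) := by
          refine sum_rect_shrink n _ (fun b hbb => ?_) (fun a h1a h2a => ?_)
          · rcases Nat.eq_zero_or_pos b with h0 | hpos
            · subst h0; simp
            · rw [betaC_eq_zero n _ _ (Or.inr (Or.inr (by omega)))]; ring
          · rcases Nat.lt_or_ge a 2 with h2 | h2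
            · have : a = 1 := by omega
              subst this
              rw [betaC_eq_zero n _ _ (Or.inl (by omega))]; ring
            · rw [betaC_eq_zero n _ _ (Or.inr (Or.inr (by omega)))]; ring
      _ = ∑ a ∈ Finset.Icc 0 n, ∑ b ∈ Finset.Icc 0 (n + 1),
          2*(b:ℝ) * betaC n (((a+1:ℕ):ℤ)-1) (b:ℤ) * (W * Y ^ (a+1) * Z ^ b) :=
          sum_shift n _
      _ = ∑ a ∈ Finset.Icc 0 n, ∑ b ∈ Finset.Icc 0 (n + 1),
          2*(b:ℝ) * betaC n (a:ℤ) (b:ℤ) * (W * Y ^ (a+1) * Z ^ b) := by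
          refine Finset.sum_congr rfl fun a _ => Finset.sum_congr rfl fun b _ => ?_
          rw [show ((a+1:ℕ):ℤ) - 1 = (a:ℤ) by push_cast; ring]
      _ = ∑ a ∈ Finset.Icc 1 n, ∑ b ∈ Finset.Icc 0 (n + 1),
          2*(b:ℝ) * betaC n (a:ℤ) (b:ℤ) * (W * Y ^ (a+1) * Z ^ b) := by
          refine sum_drop_zero n _ ?_
          refine Finset.sum_eq_zero fun b _ => ?_
          rw [betaC_eq_zero n ((0:ℕ):ℤ) (b:ℤ) (Or.inl (by omega))]; ring
      _ = ∑ a ∈ Finset.Icc 1 (n+1), ∑ b ∈ Finset.Icc 0 (n + 1),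
          2*(b:ℝ) * betaC n (a:ℤ) (b:ℤ) * (W * Y ^ (a+1) * Z ^ b) := by
          refine sum_top_zero _ ?_ (by omega)
          refine Finset.sum_eq_zero fun b hb => ?_
          simp only [Finset.mem_Icc] at hb
          rcases Nat.eq_zero_or_pos b with h0 | hpos
          · subst h0; simp
          · rw [betaC_eq_zero n ((n+1:ℕ):ℤ) (b:ℤ) (Or.inr (Or.inr (by omega)))]; ring
  rw [e1, e2, e3]
  rw [← Finset.sum_add_distrib, ← Finset.sum_add_distrib]
  refine Finset.sum_congr rfl fun a _ => ?_
  rw [← Finset.sum_add_distrib, ← Finset.sum_add_distrib]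
  refine Finset.sum_congr rfl fun b _ => ?_
  ring


noncomputable def xf (c k : ℝ) : ℝ := c / k ^ 2
noncomputable def yf (c k : ℝ) : ℝ := xf c k / (Real.exp (xf c k) - 1)
noncomputable def zf (c k : ℝ) : ℝ := xf c k * Real.exp (xf c k) / (Real.exp (xf c k) - 1)

lemma xf_pos {c k : ℝ} (hc : 0 < c) (hk : 0 < k) : 0 < xf c k := div_pos hc (by positivity)

lemma exp_sub_one_pos {c k : ℝ} (hc : 0 < c) (hk : 0 < k) : 0 < Real.exp (xf c k) - 1 := by
  have h1 := xf_pos hc hk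
  have h2 := Real.add_one_le_exp (xf c k)
  linarith

lemma yf_pos {c k : ℝ} (hc : 0 < c) (hk : 0 < k) : 0 < yf c k :=
  div_pos (xf_pos hc hk) (exp_sub_one_pos hc hk)

lemma zf_pos {c k : ℝ} (hc : 0 < c) (hk : 0 < k) : 0 < zf c k :=
  div_pos (mul_pos (xf_pos hc hk) (Real.exp_pos _)) (exp_sub_one_pos hc hk)

lemma hasDerivAt_xf {c k : ℝ} (hk : 0 < k) :
    HasDerivAt (fun s => xf c s) (-2 * c / k ^ 3) k := by
  have h := (hasDerivAt_const k c).div (hasDerivAt_pow 2 k) (pow_ne_zero 2 hk.ne')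
  refine h.congr_deriv ?_
  symm
  have hk' : k ≠ 0 := hk.ne'
  field_simp
  ring

lemma hasDerivAt_yf {c k : ℝ} (hc : 0 < c) (hk : 0 < k) :
    HasDerivAt (fun s => yf c s) (2 * (yf c k * zf c k - yf c k) / k) k := by
  have hx := hasDerivAt_xf (c := c) hk
  have hE : HasDerivAt (fun s => Real.exp (xf c s) - 1)
      (Real.exp (xf c k) * (-2 * c / k ^ 3)) k := (hx.exp).sub_const 1
  have h := hx.div hE (exp_sub_one_pos hc hk).ne'
  refine h.congr_deriv ?_
  symm
  have hD : Real.exp (xf c k) - 1 ≠ 0 := (exp_sub_one_pos hc hk).ne'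
  have hk' : k ≠ 0 := hk.ne'
  simp only [yf, zf, xf] at *
  field_simp
  ring

lemma hasDerivAt_zf {c k : ℝ} (hc : 0 < c) (hk : 0 < k) :
    HasDerivAt (fun s => zf c s) (2 * (yf c k * zf c k - zf c k) / k) k := by
  have hx := hasDerivAt_xf (c := c) hk
  have hE : HasDerivAt (fun s => Real.exp (xf c s) - 1)
      (Real.exp (xf c k) * (-2 * c / k ^ 3)) k := (hx.exp).sub_const 1
  have h := (hx.mul hx.exp).div hE (exp_sub_one_pos hc hk).ne'
  refine h.congr_deriv ?_
  symm
  simp only [Pi.mul_apply]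
  have hD : Real.exp (xf c k) - 1 ≠ 0 := (exp_sub_one_pos hc hk).ne'
  have hk' : k ≠ 0 := hk.ne'
  simp only [yf, zf, xf] at *
  field_simp
  ring

lemma key_ineq {x : ℝ} (hx : 0 < x) (a b : ℕ) (ha : 1 ≤ a) :
    (x / (Real.exp x - 1)) ^ a * (x * Real.exp x / (Real.exp x - 1)) ^ b
      ≤ (1 + (b:ℝ)/(a:ℝ)) ^ b := by
  set E := Real.exp x with hEdef
  have hEpos : 0 < E := Real.exp_pos x
  have hE1 : 1 + x ≤ E := by have := Real.add_one_le_exp x; linarith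
  have hD : 0 < E - 1 := by linarith
  set A : ℝ := (a : ℝ) with hAdef
  set B : ℝ := (b : ℝ) with hBdef
  have hA : 1 ≤ A := by rw [hAdef]; exact_mod_cast ha
  have hApos : 0 < A := by linarith
  have hB : 0 ≤ B := by rw [hBdef]; exact Nat.cast_nonneg b
  set M : ℝ := A + B with hMdef
  have hMpos : 0 < M := by linarith
  have hyb : x / (E - 1) ≤ (1 + x) / E := by
    rw [div_le_div_iff₀ hD hEpos]
    nlinarith
  have hzb : x * E / (E - 1) ≤ 1 + x := by
    rw [div_le_iff₀ hD]
    nlinarith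
  have hynn : 0 ≤ x / (E - 1) := le_of_lt (div_pos hx hD)
  have hznn : 0 ≤ x * E / (E - 1) := le_of_lt (div_pos (mul_pos hx hEpos) hD)
  have step1 : (x / (E - 1)) ^ a * (x * E / (E - 1)) ^ b
      ≤ ((1 + x) / E) ^ a * (1 + x) ^ b := by
    apply mul_le_mul (pow_le_pow_left₀ hynn hyb a) (pow_le_pow_left₀ hznn hzb b)
      (pow_nonneg hznn b) (pow_nonneg (by positivity) a)
  have hlog1 : Real.log (1 + x) ≤ Real.log (M / A) + ((1 + x) * A / M - 1) := by
    have harg : 0 < (1 + x) * A / M := by positivity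
    have h := Real.log_le_sub_one_of_pos harg
    have hsplit : Real.log ((1 + x) * A / M) = Real.log (1 + x) - Real.log (M / A) := by
      rw [Real.log_div (by positivity) hMpos.ne', Real.log_mul (by positivity) hApos.ne',
        Real.log_div hMpos.ne' hApos.ne']
      ring
    rw [hsplit] at h
    linarith
  have hlog2 : A * Real.log (M / A) ≤ B := by
    have h := Real.log_le_sub_one_of_pos (show (0:ℝ) < M / A by positivity)
    have h2 : M / A - 1 = B / A := by
      field_simp
      rw [hMdef]; ring
    rw [h2] at h
    calc A * Real.log (M / A) ≤ A * (B / A) := mul_le_mul_of_nonneg_left h (by linarith)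
      _ = B := by field_simp
  have key : M * Real.log (1 + x) ≤ B * Real.log (M / A) + A * x := by
    have h1 : M * Real.log (1 + x) ≤ M * (Real.log (M / A) + ((1 + x) * A / M - 1)) :=
      mul_le_mul_of_nonneg_left hlog1 hMpos.le
    have h2 : M * (Real.log (M / A) + ((1 + x) * A / M - 1))
        = M * Real.log (M / A) + (A * x + A - M) := by
      field_simp
      ring
    rw [h2] at h1
    have h3 : M * Real.log (M / A) = B * Real.log (M / A) + A * Real.log (M / A) := by
      rw [hMdef]; ring
    rw [hMdef] at h1 ⊢
    nlinarith [hlog2]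
  have expineq : (1 + x) ^ a * (1 + x) ^ b ≤ (M / A) ^ b * E ^ a := by
    have e1 : (1 + x) ^ a * (1 + x) ^ b = Real.exp (M * Real.log (1 + x)) := by
      rw [hMdef, hAdef, hBdef, add_mul, Real.exp_add, Real.exp_nat_mul, Real.exp_nat_mul,
        Real.exp_log (by linarith)]
    have e2 : (M / A) ^ b * E ^ a = Real.exp (B * Real.log (M / A) + A * x) := by
      rw [Real.exp_add, hBdef, hAdef, Real.exp_nat_mul, Real.exp_nat_mul,
        Real.exp_log (by positivity), hEdef]
    rw [e1, e2]
    exact Real.exp_le_exp.mpr key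
  have step2 : ((1 + x) / E) ^ a * (1 + x) ^ b ≤ (M / A) ^ b := by
    rw [div_pow, div_mul_eq_mul_div, div_le_iff₀ (by positivity)]
    exact expineq
  have hfin : (M / A) ^ b = (1 + B / A) ^ b := by
    congr 1
    rw [hMdef]
    field_simp
  calc (x / (E - 1)) ^ a * (x * E / (E - 1)) ^ b
      ≤ ((1 + x) / E) ^ a * (1 + x) ^ b := step1
    _ ≤ (M / A) ^ b := step2
    _ = (1 + B / A) ^ b := hfin

noncomputable def Ff (c : ℝ) (n : ℕ) (k : ℝ) : ℝ :=
  ∑ a ∈ Finset.Icc 1 (n + 1), ∑ b ∈ Finset.Icc 0 (n + 1),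
    betaC n (a:ℤ) (b:ℤ) * (k ^ ((2:ℤ) - (n:ℤ)) * yf c k ^ a * zf c k ^ b)

lemma hasDerivAt_Ff {c k : ℝ} (hc : 0 < c) (hk : 0 < k) (n : ℕ) :
    HasDerivAt (fun s => Ff c n s) (Ff c (n+1) k) k := by
  have hk0 : k ≠ 0 := hk.ne'
  have hY := yf_pos hc hk
  have hZ := zf_pos hc hk
  have hterm : ∀ a ∈ Finset.Icc 1 (n+1), ∀ b ∈ Finset.Icc 0 (n+1),
      HasDerivAt (fun s => betaC n (a:ℤ) (b:ℤ) * (s ^ ((2:ℤ) - (n:ℤ)) * yf c s ^ a * zf c s ^ b))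
        (betaC n (a:ℤ) (b:ℤ) * (k ^ ((2:ℤ) - (n:ℤ) - 1) *
          ((2 - (n:ℝ) - 2*(a:ℝ) - 2*(b:ℝ)) * (yf c k ^ a * zf c k ^ b)
            + 2*(a:ℝ) * (yf c k ^ a * zf c k ^ (b+1))
            + 2*(b:ℝ) * (yf c k ^ (a+1) * zf c k ^ b)))) k := by
    intro a hmem b _
    simp only [Finset.mem_Icc] at hmem
    obtain ⟨a', rfl⟩ : ∃ a', a = a' + 1 := ⟨a - 1, by omega⟩
    have hkz : HasDerivAt (fun s : ℝ => s ^ ((2:ℤ) - (n:ℤ)))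
        ((((2:ℤ) - (n:ℤ) : ℤ):ℝ) * k ^ ((2:ℤ) - (n:ℤ) - 1)) k :=
      hasDerivAt_zpow _ k (Or.inl hk0)
    have hy : HasDerivAt (fun s => yf c s ^ (a'+1))
        ((((a'+1 : ℕ):ℝ) * yf c k ^ a') * (2 * (yf c k * zf c k - yf c k) / k)) k := by
      have := (hasDerivAt_pow (a'+1) (yf c k)).comp k (hasDerivAt_yf hc hk)
      simpa [Function.comp_def] using this
    have hz : HasDerivAt (fun s => zf c s ^ b)
        ((((b : ℕ):ℝ) * zf c k ^ (b-1)) * (2 * (yf c k * zf c k - zf c k) / k)) k := by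
      have := (hasDerivAt_pow b (zf c k)).comp k (hasDerivAt_zf hc hk)
      simpa [Function.comp_def] using this
    have h := (((hkz.mul hy).mul hz)).const_mul (betaC n ((a'+1:ℕ):ℤ) (b:ℤ))
    refine h.congr_deriv ?_
    symm
    have hkp : k ^ ((2:ℤ) - (n:ℤ)) = k ^ ((2:ℤ) - (n:ℤ) - 1) * k := by
      rw [← zpow_add_one₀ hk0]
      congr 1
      ring
    rcases b with _ | b'
    · simp only [pow_zero, Nat.cast_zero, Nat.cast_add, Nat.cast_one]
      rw [hkp]
      push_cast
      field_simp
      ring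
    · have hbs : b' + 1 - 1 = b' := by omega
      simp only [Pi.mul_apply]
      rw [hbs, hkp]
      push_cast
      field_simp
      ring
  have hsum : HasDerivAt (fun s => Ff c n s)
      (∑ a ∈ Finset.Icc 1 (n + 1), ∑ b ∈ Finset.Icc 0 (n + 1),
        betaC n (a:ℤ) (b:ℤ) * (k ^ ((2:ℤ) - (n:ℤ) - 1) *
          ((2 - (n:ℝ) - 2*(a:ℝ) - 2*(b:ℝ)) * (yf c k ^ a * zf c k ^ b)
            + 2*(a:ℝ) * (yf c k ^ a * zf c k ^ (b+1))
            + 2*(b:ℝ) * (yf c k ^ (a+1) * zf c k ^ b)))) k := by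
    unfold Ff
    exact HasDerivAt.fun_sum fun a ha => HasDerivAt.fun_sum fun b hb => hterm a ha b hb
  have hid := sum_identity n (yf c k) (zf c k) (k ^ ((2:ℤ) - (n:ℤ) - 1))
  have hFf : Ff c (n+1) k
      = ∑ a ∈ Finset.Icc 1 (n + 2), ∑ b ∈ Finset.Icc 0 (n + 2),
        betaC (n+1) (a:ℤ) (b:ℤ) * (k ^ ((2:ℤ) - (n:ℤ) - 1) * yf c k ^ a * zf c k ^ b) := by
    unfold Ff
    have : (2:ℤ) - ((n+1 : ℕ):ℤ) = (2:ℤ) - (n:ℤ) - 1 := by push_cast; ring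
    rw [this]
  rw [hFf, hid]
  exact hsum

lemma iteratedDeriv_eq_Ff {c : ℝ} (hc : 0 < c) (n : ℕ) :
    ∀ k : ℝ, 0 < k →
      iteratedDeriv n (fun s => c / (Real.exp (c / s ^ 2) - 1)) k = Ff c n k := by
  induction n with
  | zero =>
    intro k hk
    rw [iteratedDeriv_zero]
    have h1 : Finset.Icc 1 (0+1) = ({1} : Finset ℕ) := by decide
    have h2 : Finset.Icc 0 (0+1) = ({0, 1} : Finset ℕ) := by decide
    have hD : Real.exp (c / k ^ 2) - 1 ≠ 0 := by
      have := exp_sub_one_pos hc hk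
      simp only [xf] at this
      linarith
    have e0 : Ff c 0 k = k ^ (2:ℤ) * yf c k := by
      unfold Ff
      rw [h1, h2]
      rw [Finset.sum_singleton]
      rw [show ({0, 1} : Finset ℕ) = insert 0 {1} from rfl]
      rw [Finset.sum_insert (by decide), Finset.sum_singleton]
      norm_num [betaC]
    rw [e0]
    unfold yf xf
    rw [show k ^ (2:ℤ) = k ^ (2:ℕ) from zpow_ofNat k 2]
    have hk0 : k ≠ 0 := hk.ne'
    field_simp
  | succ n ih =>
    intro k hk
    rw [iteratedDeriv_succ]
    have hev : iteratedDeriv n (fun s => c / (Real.exp (c / s ^ 2) - 1)) =ᶠ[nhds k] Ff c n :=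
      Filter.eventuallyEq_of_mem (Ioi_mem_nhds hk) fun s hs => ih s hs
    rw [hev.deriv_eq]
    exact (hasDerivAt_Ff hc hk n).deriv

lemma Ff_bound {c k : ℝ} (hc : 0 < c) (hk : 0 < k) (n : ℕ) :
    |Ff c n k| ≤ (∑ a ∈ Finset.Icc 1 (n + 1), ∑ b ∈ Finset.Icc 0 (n + 1 - a),
        |betaC n (a : ℤ) (b : ℤ)| * (1 + (b : ℝ) / (a : ℝ)) ^ b) * k ^ ((2 : ℤ) - (n : ℤ)) := by
  have hx := xf_pos hc hk
  have hkp : (0:ℝ) < k ^ ((2 : ℤ) - (n : ℤ)) := zpow_pos hk _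
  have step1 : |Ff c n k| ≤ ∑ a ∈ Finset.Icc 1 (n + 1), ∑ b ∈ Finset.Icc 0 (n + 1),
      |betaC n (a : ℤ) (b : ℤ)| * ((1 + (b : ℝ) / (a : ℝ)) ^ b * k ^ ((2 : ℤ) - (n : ℤ))) := by
    refine (Finset.abs_sum_le_sum_abs _ _).trans ?_
    refine Finset.sum_le_sum fun a ha => ?_
    refine (Finset.abs_sum_le_sum_abs _ _).trans ?_
    refine Finset.sum_le_sum fun b hb => ?_
    simp only [Finset.mem_Icc] at ha
    rw [abs_mul]
    refine mul_le_mul_of_nonneg_left ?_ (abs_nonneg _)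
    have hY := yf_pos hc hk
    have hZ := zf_pos hc hk
    have habs : |k ^ ((2 : ℤ) - (n : ℤ)) * yf c k ^ a * zf c k ^ b|
        = k ^ ((2 : ℤ) - (n : ℤ)) * (yf c k ^ a * zf c k ^ b) := by
      rw [abs_of_pos (by positivity)]
      ring
    rw [habs]
    rw [mul_comm ((1 + (b : ℝ) / (a : ℝ)) ^ b) (k ^ ((2 : ℤ) - (n : ℤ)))]
    refine mul_le_mul_of_nonneg_left ?_ hkp.le
    have := key_ineq hx a b ha.1
    simpa only [yf, zf] using this
  refine step1.trans (le_of_eq ?_)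
  have inner : ∀ a : ℕ, 1 ≤ a → a ≤ n + 1 →
      (∑ b ∈ Finset.Icc 0 (n + 1 - a),
        |betaC n (a:ℤ) (b:ℤ)| * ((1 + (b:ℝ)/(a:ℝ)) ^ b * k ^ ((2:ℤ) - (n:ℤ))))
      = ∑ b ∈ Finset.Icc 0 (n + 1),
        |betaC n (a:ℤ) (b:ℤ)| * ((1 + (b:ℝ)/(a:ℝ)) ^ b * k ^ ((2:ℤ) - (n:ℤ))) := by
    intro a h1 h2
    refine Finset.sum_subset (Finset.Icc_subset_Icc le_rfl (by omega)) ?_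
    intro b hb hnb
    simp only [Finset.mem_Icc] at hb hnb
    rw [betaC_eq_zero n (a:ℤ) (b:ℤ) (Or.inr (Or.inr (by omega)))]
    simp
  rw [Finset.sum_mul]
  refine (Finset.sum_congr rfl fun a ha => ?_).symm
  simp only [Finset.mem_Icc] at ha
  rw [Finset.sum_mul]
  rw [show (∑ b ∈ Finset.Icc 0 (n + 1 - a),
      |betaC n (a:ℤ) (b:ℤ)| * (1 + (b:ℝ)/(a:ℝ)) ^ b * k ^ ((2:ℤ) - (n:ℤ)))
      = ∑ b ∈ Finset.Icc 0 (n + 1 - a),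
      |betaC n (a:ℤ) (b:ℤ)| * ((1 + (b:ℝ)/(a:ℝ)) ^ b * k ^ ((2:ℤ) - (n:ℤ))) from
    Finset.sum_congr rfl fun b _ => by ring]
  exact inner a ha.1 ha.2

lemma iteratedDeriv_zero_fun (n : ℕ) : iteratedDeriv n (fun _ : ℝ => (0:ℝ)) = fun _ => 0 := by
  induction n with
  | zero => rw [iteratedDeriv_zero]
  | succ m ih =>
    rw [iteratedDeriv_succ', deriv_const']
    exact ih

theorem stmt_4 (d : ℕ) (hd : 1 ≤ d) (n : ℕ) :
    ∃ R : ℝ, 0 ≤ R ∧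
      R = (∑ a ∈ Finset.Icc 1 (n + 1), ∑ b ∈ Finset.Icc 0 (n + 1 - a),
            |betaC n (a : ℤ) (b : ℤ)| * (1 + (b : ℝ) / (a : ℝ)) ^ b) ∧
      ∀ k : ℝ, 0 < k → ∀ q : EuclideanSpace ℝ (Fin d),
        |iteratedDeriv n (fun s => rbar d q s) k| ≤ R * k ^ ((2 : ℤ) - (n : ℤ)) := by
  classical
  set R : ℝ := ∑ a ∈ Finset.Icc 1 (n + 1), ∑ b ∈ Finset.Icc 0 (n + 1 - a),
      |betaC n (a : ℤ) (b : ℤ)| * (1 + (b : ℝ) / (a : ℝ)) ^ b with hRdef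
  have hR0 : 0 ≤ R := by
    rw [hRdef]
    refine Finset.sum_nonneg fun a _ => Finset.sum_nonneg fun b _ => ?_
    have : (0:ℝ) ≤ 1 + (b : ℝ) / (a : ℝ) := by positivity
    positivity
  refine ⟨R, hR0, rfl, ?_⟩
  intro k hk q
  by_cases hq : q = 0
  · subst hq
    have hfun : (fun s => rbar d 0 s) = fun s : ℝ => s ^ 2 := by
      funext s
      simp [rbar]
    rw [hfun]
    have hder1 : deriv (fun s : ℝ => s ^ 2) = fun s => 2 * s := by
      funext s
      rw [deriv_pow_field]
      norm_num
    have hder2 : deriv (fun s : ℝ => 2 * s) = fun _ : ℝ => (2:ℝ) := by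
      funext s
      simpa using ((hasDerivAt_id s).const_mul (2:ℝ)).deriv
    have hder3 : deriv (fun _ : ℝ => (2:ℝ)) = fun _ : ℝ => (0:ℝ) := deriv_const' 2
    match n with
    | 0 =>
      rw [iteratedDeriv_zero]
      have hR1 : R = 1 := by
        rw [hRdef]
        norm_num [betaC]
      have hzp : k ^ ((2:ℤ) - ((0:ℕ):ℤ)) = k ^ (2:ℕ) := by
        rw [show (2:ℤ) - ((0:ℕ):ℤ) = ((2:ℕ):ℤ) by norm_num, zpow_natCast]
      rw [hR1, hzp, one_mul, abs_of_pos (by positivity)]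
    | 1 =>
      rw [iteratedDeriv_one, hder1]
      have hR2 : (2:ℝ) ≤ R := by
        rw [hRdef]
        rw [show Finset.Icc 1 (1+1) = ({1, 2} : Finset ℕ) by decide]
        rw [Finset.sum_insert (by decide), Finset.sum_singleton]
        rw [show Finset.Icc 0 (1+1-1) = ({0, 1} : Finset ℕ) by decide,
          show Finset.Icc 0 (1+1-2) = ({0} : Finset ℕ) by decide]
        rw [show ({0, 1} : Finset ℕ) = insert 0 {1} from rfl]
        rw [Finset.sum_insert (by decide), Finset.sum_singleton, Finset.sum_singleton]
        norm_num [betaC]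
      have hzp : k ^ ((2:ℤ) - ((1:ℕ):ℤ)) = k := by norm_num
      show |2 * k| ≤ R * k ^ ((2:ℤ) - ((1:ℕ):ℤ))
      rw [hzp, abs_of_pos (by positivity)]
      exact mul_le_mul_of_nonneg_right hR2 hk.le
    | 2 =>
      rw [iteratedDeriv_succ, iteratedDeriv_one, hder1, hder2]
      have hR2 : (2:ℝ) ≤ R := by
        rw [hRdef]
        rw [show Finset.Icc 1 (2+1) = ({1, 2, 3} : Finset ℕ) by decide]
        rw [Finset.sum_insert (by decide), Finset.sum_insert (by decide), Finset.sum_singleton]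
        rw [show Finset.Icc 0 (2+1-1) = ({0, 1, 2} : Finset ℕ) by decide,
          show Finset.Icc 0 (2+1-2) = ({0, 1} : Finset ℕ) by decide,
          show Finset.Icc 0 (2+1-3) = ({0} : Finset ℕ) by decide]
        rw [show ({0, 1, 2} : Finset ℕ) = insert 0 (insert 1 {2}) from rfl,
          show ({0, 1} : Finset ℕ) = insert 0 {1} from rfl]
        rw [Finset.sum_insert (by decide), Finset.sum_insert (by decide), Finset.sum_singleton,
          Finset.sum_insert (by decide), Finset.sum_singleton, Finset.sum_singleton]
        norm_num [betaC]
      have hzp : k ^ ((2:ℤ) - ((2:ℕ):ℤ)) = 1 := by norm_num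
      show |(2:ℝ)| ≤ R * k ^ ((2:ℤ) - ((2:ℕ):ℤ))
      rw [hzp, mul_one, abs_of_pos (by norm_num)]
      exact hR2
    | (m+3) =>
      have : iteratedDeriv (m+3) (fun s : ℝ => s ^ 2) = fun _ => 0 := by
        rw [iteratedDeriv_succ', hder1, iteratedDeriv_succ', hder2, iteratedDeriv_succ', hder3]
        exact iteratedDeriv_zero_fun m
      rw [this]
      simp only [abs_zero]
      positivity
  · have hc : 0 < ‖q‖ ^ 2 := by
      have : 0 < ‖q‖ := norm_pos_iff.mpr hq
      positivity
    have hfun : (fun s => rbar d q s)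
        = fun s : ℝ => ‖q‖ ^ 2 / (Real.exp (‖q‖ ^ 2 / s ^ 2) - 1) := by
      funext s
      simp [rbar, hq]
    rw [hfun, iteratedDeriv_eq_Ff hc n k hk]
    exact Ff_bound hc hk n
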